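/- Let Ric : T_xM → T_xM be a linear map vanishing on V_x and with image in H_x (where T_xM = H_x ⊕ V_x), and let A_t be a (pathwise continuous, finite-variation-plus-martingale) family of endomorphisms with A_t(H_x) ⊆ V_x, A_t(V_x) = 0, A_0 = 0. Let Q_t solve dQ_t = −½ Ric_t Q_t dt, Q_0 = id, where Ric_t = ∥_t^{-1} Ric ∥_t preserves the same structure, and let Q̂_t solve dQ̂_t = −½(id − A_t) Ric_t (id + A_t) Q̂_t dt, Q̂_0 = id. Then (id + A_t)Q̂_t = Q_t + ∫₀^t dA_r Q_r and ((id + A_t)Q̂_t)^{-1} = Q_t^{-1} − ∫₀^t dA_r Q_r Q_t^{-1}. -/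

import Mathlib

open ContinuousLinearMap

private theorem ode_zero_nonneg {F : Type*} [NormedAddCommGroup F] [NormedSpace ℝ F]
    (f : ℝ → F) (K : ℝ → ℝ) (hK : Continuous K)
    (hf0 : f 0 = 0)
    (hder : ∀ t, ∃ g, HasDerivAt f g t ∧ ‖g‖ ≤ K t * ‖f t‖) :
    ∀ t, 0 ≤ t → f t = 0 := by
  intro t ht
  choose g hg hb using hder
  obtain ⟨C, hC⟩ := (isCompact_Icc (a := (0:ℝ)) (b := t)).exists_bound_of_continuousOn
    hK.continuousOn
  have key : ∀ x ∈ Set.Icc (0:ℝ) t, ‖f x‖ ≤ gronwallBound 0 C 0 (x - 0) := by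
    apply norm_le_gronwallBound_of_norm_deriv_right_le
    · exact fun x _ => (hg x).continuousAt.continuousWithinAt
    · exact fun x _ => (hg x).hasDerivWithinAt
    · simp [hf0]
    · intro x hx
      have h1 : K x ≤ C := le_trans (le_abs_self _) (hC x (Set.mem_Icc_of_Ico hx))
      have := le_trans (hb x) (mul_le_mul_of_nonneg_right h1 (norm_nonneg _))
      linarith
  have h2 := key t ⟨ht, le_refl t⟩
  rw [sub_zero, gronwallBound_ε0_δ0] at h2
  exact norm_le_zero_iff.mp h2

private theorem ode_zero {F : Type*} [NormedAddCommGroup F] [NormedSpace ℝ F]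
    (f : ℝ → F) (K : ℝ → ℝ) (hK : Continuous K)
    (hf0 : f 0 = 0)
    (hder : ∀ t, ∃ g, HasDerivAt f g t ∧ ‖g‖ ≤ K t * ‖f t‖) :
    ∀ t, f t = 0 := by
  intro t
  rcases le_or_gt 0 t with ht | ht
  · exact ode_zero_nonneg f K hK hf0 hder t ht
  · have h2 : ∀ s, ∃ g, HasDerivAt (fun s => f (-s)) g s ∧ ‖g‖ ≤ K (-s) * ‖f (-s)‖ := by
      intro s
      obtain ⟨g, hg, hb⟩ := hder (-s)
      refine ⟨(-1 : ℝ) • g, ?_, by simpa using hb⟩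
      exact HasDerivAt.scomp s hg (hasDerivAt_neg s)
    have := ode_zero_nonneg (fun s => f (-s)) (fun s => K (-s))
      (hK.comp continuous_neg) (by simpa using hf0) h2 (-t) (by linarith)
    simpa using this

set_option maxHeartbeats 800000 in
/-- **Conversion formula `(id + A_t)Q̂_t = Q_t + ∫₀ᵗ dA_r Q_r` and its inverse.**
Pathwise (deterministic) version in `T_xM = H ⊕ V` finite dimensional: `Ric_t`
vanishes on `V` with image in `H`; `A_t` maps `H` into `V` and annihilates `V`,
`A_0 = 0` (a pathwise differentiable path with derivative `A'`); `Q` and `Q̂`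
solve `dQ_t = −½ Ric_t Q_t dt`, `Q_0 = id`, and
`dQ̂_t = −½ (id−A_t) Ric_t (id+A_t) Q̂_t dt`, `Q̂_0 = id`.  Then
`(id + A_t)Q̂_t = Q_t + ∫₀ᵗ dA_r Q_r` and
`((id + A_t)Q̂_t)^{-1} = Q_t^{-1} − (∫₀ᵗ dA_r Q_r) Q_t^{-1}`. -/
theorem stmt10 {E : Type*} [NormedAddCommGroup E] [NormedSpace ℝ E]
    [FiniteDimensional ℝ E]
    (Hs Vs : Submodule ℝ E) (hcompl : IsCompl Hs Vs)
    (Ric : ℝ → E →L[ℝ] E) (hRic_cont : Continuous Ric)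
    (hRicV : ∀ t, ∀ v ∈ Vs, Ric t v = 0)
    (hRicH : ∀ t x, Ric t x ∈ Hs)
    (A A' : ℝ → E →L[ℝ] E)
    (hA : ∀ t, HasDerivAt A (A' t) t) (hA'_cont : Continuous A')
    (hA0 : A 0 = 0)
    (hAH : ∀ t, ∀ h ∈ Hs, A t h ∈ Vs)
    (hAV : ∀ t, ∀ v ∈ Vs, A t v = 0)
    (Q Qh : ℝ → E →L[ℝ] E)
    (hQ0 : Q 0 = ContinuousLinearMap.id ℝ E)
    (hQ : ∀ t, HasDerivAt Q (-(1 / 2 : ℝ) • (Ric t).comp (Q t)) t)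
    (hQh0 : Qh 0 = ContinuousLinearMap.id ℝ E)
    (hQh : ∀ t, HasDerivAt Qh (-(1 / 2 : ℝ) •
      ((ContinuousLinearMap.id ℝ E - A t).comp
        ((Ric t).comp ((ContinuousLinearMap.id ℝ E + A t).comp (Qh t))))) t)
    (Qinv : ℝ → E →L[ℝ] E)
    (hQinv : ∀ t, (Qinv t).comp (Q t) = ContinuousLinearMap.id ℝ E ∧
      (Q t).comp (Qinv t) = ContinuousLinearMap.id ℝ E) :
    ∀ t,
      ((ContinuousLinearMap.id ℝ E + A t).comp (Qh t)
          = Q t + ∫ r in (0:ℝ)..t, (A' r).comp (Q r)) ∧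
      ((ContinuousLinearMap.id ℝ E + A t).comp (Qh t)).comp
          (Qinv t - (∫ r in (0:ℝ)..t, (A' r).comp (Q r)).comp (Qinv t))
        = ContinuousLinearMap.id ℝ E ∧
      (Qinv t - (∫ r in (0:ℝ)..t, (A' r).comp (Q r)).comp (Qinv t)).comp
          ((ContinuousLinearMap.id ℝ E + A t).comp (Qh t))
        = ContinuousLinearMap.id ℝ E := by
  -- continuity
  have hQcont : Continuous Q := by
    rw [continuous_iff_continuousAt]; exact fun t => (hQ t).continuousAt
  have hAcont : Continuous A := by
    rw [continuous_iff_continuousAt]; exact fun t => (hA t).continuousAt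
  -- structural facts about A and A'
  have hAim : ∀ t x, A t x ∈ Vs := by
    intro t x
    obtain ⟨y, z, hy, hz, rfl⟩ := Submodule.codisjoint_iff_exists_add_eq.mp hcompl.codisjoint x
    rw [map_add, hAV t z hz, add_zero]
    exact hAH t y hy
  have hcl : IsClosed (Vs : Set E) := Vs.closed_of_finiteDimensional
  have hA'im : ∀ t x, A' t x ∈ Vs := by
    intro t x
    have hd : HasDerivAt (fun s => A s x) (A' t x) t := by
      simpa using (hA t).clm_apply (hasDerivAt_const t x)
    refine hcl.mem_of_tendsto (hasDerivAt_iff_tendsto_slope.mp hd)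
      (Filter.Eventually.of_forall fun s => ?_)
    simp only [slope_def_module]
    exact Vs.smul_mem _ (Vs.sub_mem (hAim s x) (hAim t x))
  have hA'V : ∀ t, ∀ v ∈ Vs, A' t v = 0 := by
    intro t v hv
    have h1 : HasDerivAt (fun s => A s v) (A' t v) t := by
      simpa using (hA t).clm_apply (hasDerivAt_const t v)
    have heq : (fun s => A s v) = fun _ : ℝ => (0:E) := funext fun s => hAV s v hv
    rw [heq] at h1
    exact h1.unique (hasDerivAt_const t 0)
  -- Q fixes Vs pointwise
  have hQV : ∀ v ∈ Vs, ∀ t, Q t v = v := by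
    intro v hv
    have := ode_zero (fun t => Q t v - v) (fun t => ‖(-(1/2:ℝ)) • Ric t‖)
      (by fun_prop)
      (by simp [hQ0])
      (by
        intro t
        refine ⟨((-(1/2:ℝ)) • Ric t) (Q t v - v), ?_, le_opNorm _ _⟩
        have h1 : HasDerivAt (fun t => Q t v) ((-(1/2:ℝ) • (Ric t).comp (Q t)) v) t := by
          simpa using (hQ t).clm_apply (hasDerivAt_const t v)
        have h2 := h1.sub_const v
        convert h2 using 1
        simp [map_sub, hRicV t v hv])
    intro t
    have := this t
    simpa [sub_eq_zero] using this
  -- Qinv fixes Vs pointwise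
  have hQinvV : ∀ v ∈ Vs, ∀ t, Qinv t v = v := by
    intro v hv t
    have h1 := DFunLike.congr_fun (hQinv t).1 v
    simpa [hQV v hv t] using h1
  -- the integral term
  set I : ℝ → E →L[ℝ] E := fun t => ∫ r in (0:ℝ)..t, (A' r).comp (Q r) with hIdef
  have hicont : Continuous fun r => (A' r).comp (Q r) := hA'_cont.clm_comp hQcont
  have hInt : ∀ a b : ℝ, IntervalIntegrable (fun r => (A' r).comp (Q r))
      MeasureTheory.volume a b := fun a b => hicont.intervalIntegrable a b
  have hI' : ∀ t, HasDerivAt I ((A' t).comp (Q t)) t := fun t =>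
    (hicont.integral_hasStrictDerivAt 0 t).hasDerivAt
  have hIapp : ∀ t x, I t x = ∫ r in (0:ℝ)..t, A' r (Q r x) := by
    intro t x
    rw [hIdef]
    exact ContinuousLinearMap.intervalIntegral_apply (hInt 0 t) x
  have hIim : ∀ t x, I t x ∈ Vs := by
    intro t x
    have hgc : Continuous fun r => (⟨A' r (Q r x), hA'im r _⟩ : Vs) := by
      apply Continuous.subtype_mk
      exact hA'_cont.clm_apply (hQcont.clm_apply continuous_const)
    have := ContinuousLinearMap.intervalIntegral_comp_comm (a := (0:ℝ)) (b := t)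
      (μ := MeasureTheory.volume) Vs.subtypeL (hgc.intervalIntegrable 0 t)
    rw [hIapp t x]
    have heq : (fun r => A' r (Q r x))
        = fun r => Vs.subtypeL (⟨A' r (Q r x), hA'im r _⟩ : Vs) := rfl
    rw [heq, this]
    exact Submodule.coe_mem _
  have hIV : ∀ t, ∀ v ∈ Vs, I t v = 0 := by
    intro t v hv
    have heq : (fun r => A' r (Q r v)) = fun _ : ℝ => (0:E) :=
      funext fun r => by rw [hQV v hv r]; exact hA'V r v hv
    rw [hIapp t v, heq, intervalIntegral.integral_zero]
  have hI0 : I 0 = 0 := intervalIntegral.integral_same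
  -- the comparison path R and the difference D
  set R : ℝ → E →L[ℝ] E :=
    fun t => (ContinuousLinearMap.id ℝ E - A t).comp (Q t + I t) with hRdef
  have hR' : ∀ t, HasDerivAt R
      ((-(A' t)).comp (Q t + I t)
        + (ContinuousLinearMap.id ℝ E - A t).comp
            (-(1/2:ℝ) • (Ric t).comp (Q t) + (A' t).comp (Q t))) t := by
    intro t
    have h1 : HasDerivAt (fun t => ContinuousLinearMap.id ℝ E - A t) (-(A' t)) t :=
      (hA t).const_sub _
    exact h1.clm_comp ((hQ t).add (hI' t))
  -- D := Qh - R is zero (Gronwall)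
  have hDzero : ∀ t, Qh t - R t = 0 := by
    apply ode_zero (fun t => Qh t - R t)
      (fun t => ‖(-(1/2:ℝ)) • ((ContinuousLinearMap.id ℝ E - A t).comp (Ric t))‖
        * ‖ContinuousLinearMap.id ℝ E + A t‖)
    · fun_prop
    · rw [hRdef]
      simp [hQh0, hQ0, hA0, hI0]
    · intro t
      refine ⟨_, (hQh t).sub (hR' t), ?_⟩
      have hkey : (-(1 / 2 : ℝ) •
            ((ContinuousLinearMap.id ℝ E - A t).comp
              ((Ric t).comp ((ContinuousLinearMap.id ℝ E + A t).comp (Qh t)))))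
          - ((-(A' t)).comp (Q t + I t)
            + (ContinuousLinearMap.id ℝ E - A t).comp
                (-(1/2:ℝ) • (Ric t).comp (Q t) + (A' t).comp (Q t)))
          = ((-(1/2:ℝ)) • ((ContinuousLinearMap.id ℝ E - A t).comp (Ric t))).comp
              ((ContinuousLinearMap.id ℝ E + A t).comp (Qh t - R t)) := by
        ext x
        have e1 : A' t (I t x) = 0 := hA'V t _ (hIim t x)
        have e2 : A t (A' t (Q t x)) = 0 := hAV t _ (hA'im t _)
        have e3 : A t (I t x) = 0 := hAV t _ (hIim t x)
        have e4 : A t (A t (Q t x)) = 0 := hAV t _ (hAim t _)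
        have e5 : Ric t (I t x) = 0 := hRicV t _ (hIim t x)
        have e6 : Ric t (A t (Qh t x)) = 0 := hRicV t _ (hAim t _)
        have e7 : A t (A t (Qh t x)) = 0 := hAV t _ (hAim t _)
        have e8 : Ric t (A t (Q t x)) = 0 := hRicV t _ (hAim t _)
        simp only [hRdef, ContinuousLinearMap.sub_apply, ContinuousLinearMap.add_apply,
          ContinuousLinearMap.comp_apply, ContinuousLinearMap.smul_apply,
          ContinuousLinearMap.neg_apply, ContinuousLinearMap.id_apply,
          map_add, map_sub, map_smul, map_neg, map_zero, smul_zero,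
          e1, e2, e3, e4, e5, e6, e7, e8]
        module
      rw [hkey]
      calc ‖((-(1/2:ℝ)) • ((ContinuousLinearMap.id ℝ E - A t).comp (Ric t))).comp
              ((ContinuousLinearMap.id ℝ E + A t).comp (Qh t - R t))‖
          ≤ ‖(-(1/2:ℝ)) • ((ContinuousLinearMap.id ℝ E - A t).comp (Ric t))‖
            * ‖(ContinuousLinearMap.id ℝ E + A t).comp (Qh t - R t)‖ :=
            ContinuousLinearMap.opNorm_comp_le _ _
        _ ≤ ‖(-(1/2:ℝ)) • ((ContinuousLinearMap.id ℝ E - A t).comp (Ric t))‖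
            * (‖ContinuousLinearMap.id ℝ E + A t‖ * ‖Qh t - R t‖) := by
            exact mul_le_mul_of_nonneg_left (ContinuousLinearMap.opNorm_comp_le _ _)
              (norm_nonneg _)
        _ = ‖(-(1/2:ℝ)) • ((ContinuousLinearMap.id ℝ E - A t).comp (Ric t))‖
            * ‖ContinuousLinearMap.id ℝ E + A t‖ * ‖Qh t - R t‖ := by ring
  have hQhR : ∀ t, Qh t = (ContinuousLinearMap.id ℝ E - A t).comp (Q t + I t) := by
    intro t
    have := hDzero t
    rw [sub_eq_zero] at this
    exact this
  -- conclusion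
  intro t
  have heq1 : (ContinuousLinearMap.id ℝ E + A t).comp (Qh t) = Q t + I t := by
    ext x
    have e2 : A t (A t (Q t x)) = 0 := hAV t _ (hAim t _)
    have e3 : A t (I t x) = 0 := hAV t _ (hIim t x)
    simp only [hQhR t, ContinuousLinearMap.comp_apply, ContinuousLinearMap.add_apply,
      ContinuousLinearMap.sub_apply, ContinuousLinearMap.id_apply,
      map_add, map_sub, map_zero, smul_zero, e2, e3]
    abel
  refine ⟨heq1, ?_, ?_⟩
  · rw [heq1, show (∫ r in (0:ℝ)..t, (A' r).comp (Q r)) = I t from rfl]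
    ext x
    have hy : Q t (Qinv t x) = x := DFunLike.congr_fun (hQinv t).2 x
    have h1 : Q t (I t (Qinv t x)) = I t (Qinv t x) := hQV _ (hIim t _) t
    have h2 : I t (I t (Qinv t x)) = 0 := hIV t _ (hIim t _)
    simp only [ContinuousLinearMap.comp_apply, ContinuousLinearMap.add_apply,
      ContinuousLinearMap.sub_apply, ContinuousLinearMap.id_apply,
      map_sub, map_add, map_zero, smul_zero, h1, h2, hy]
    abel
  · rw [heq1, show (∫ r in (0:ℝ)..t, (A' r).comp (Q r)) = I t from rfl]
    ext x
    have hy : Qinv t (Q t x) = x := DFunLike.congr_fun (hQinv t).1 x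
    have h1 : Qinv t (I t x) = I t x := hQinvV _ (hIim t x) t
    have h2 : I t (I t x) = 0 := hIV t _ (hIim t x)
    simp only [ContinuousLinearMap.comp_apply, ContinuousLinearMap.add_apply,
      ContinuousLinearMap.sub_apply, ContinuousLinearMap.id_apply,
      map_add, map_sub, map_zero, smul_zero, hy, h1, h2]
    abel
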